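/- With the constant C₂ of the propagation-of-chaos estimate, for all N ∈ ℕ, all γ ∈ (0, γ₀], all m ∈ ℕ, all η₀ ∈ P(𝕋^d) and all k ∈ {1,…,N}, if (X_m) is the particle chain started from η₀^{⊗N} with kernel R_{N,γ}, then W_{ρ_k}(Law(X_{1,m},…,X_{k,m}), η_m^{⊗k}) ≤ C₂ k α(N) γ Σ_{s=1}^m (1 − γκ)^{s−1}, where (X_{1,m},…,X_{k,m}) are the first k coordinates of X_m. -/

import Mathlib

open MeasureTheory ProbabilityTheory Real Filter
open scoped ENNReal NNReal BigOperators

noncomputable section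

/-- The flat `d`-dimensional torus. -/
abbrev Torus (d : ℕ) : Type := Fin d → AddCircle (1 : ℝ)

/-- Canonical projection from `ℝ^d` to the torus. -/
def Torus.proj {d : ℕ} (v : Fin d → ℝ) : Torus d := fun i => (v i : AddCircle (1 : ℝ))

/-- The geodesic (Euclidean) distance on the torus. -/
def tdist {d : ℕ} (x y : Torus d) : ℝ := Real.sqrt (∑ i, (dist (x i) (y i)) ^ 2)

/-- The corresponding `ℓ²` distance on `(𝕋^d)^N`. -/
def tdistN {d N : ℕ} (x y : Fin N → Torus d) : ℝ := Real.sqrt (∑ i, (tdist (x i) (y i)) ^ 2)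

/-- `b` is a `C¹` vector field on the torus: its periodic lift is `C¹`. -/
def IsC1Drift {d : ℕ} (b : Torus d → Fin d → ℝ) : Prop :=
  ContDiff ℝ 1 (fun v : Fin d → ℝ => b (Torus.proj v))

/-- `λ` is Lipschitz with constant `L` for the geodesic distance. -/
def LipDrift {d : ℕ} (L : ℝ) (lam : Torus d → ℝ) : Prop :=
  ∀ x y, |lam x - lam y| ≤ L * tdist x y

/-- The standard Gaussian distribution `N(0, I_d)` on `ℝ^d`. -/
def stdGaussian (d : ℕ) : Measure (Fin d → ℝ) := Measure.pi fun _ => gaussianReal 0 1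

/-- The exponential distribution `E(1)` on `ℝ`. -/
def expLaw : Measure ℝ := volume.withDensity (exponentialPDF 1)

/-- The uniform distribution on `[0,1]`. -/
def unifLaw : Measure ℝ := volume.restrict (Set.Icc (0 : ℝ) 1)

/-- The Euler–Maruyama transition kernel `K`:
`K(x,·)` is the law of `x + γ b(x) + √γ G` modulo `ℤ^d`, `G ~ N(0, I_d)`. -/
def eulerK {d : ℕ} (b : Torus d → Fin d → ℝ) (γ : ℝ) (x : Torus d) : Measure (Torus d) :=
  (stdGaussian d).map (fun g => x + Torus.proj (fun i => γ * b x i + Real.sqrt γ * g i))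

/-- The killing probability at `z`: `p(z) = 1 - exp(-γ λ(z))`. -/
def pkill {d : ℕ} (lam : Torus d → ℝ) (γ : ℝ) (z : Torus d) : ℝ :=
  1 - Real.exp (-(γ * lam z))

/-- The rebirth kernel `Q_μ`: `Q_μ(x,·)` is the law of `X_H` where `X₀ ~ K(x,·)`,
`X_k ~ μK` for `k ≥ 1`, `U_k ~ U([0,1])` all independent and
`H = inf {k | U_k ≥ p(X_k)}`.  It is given by the explicit formula
`Q_μ f (x) = K[f(1-p)](x) + ∑_{k ≥ 1} μK[f(1-p)] (μK p)^(k-1) K p(x)`. -/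
def Qker {d : ℕ} (b : Torus d → Fin d → ℝ) (lam : Torus d → ℝ) (γ : ℝ)
    (μ : Measure (Torus d)) (x : Torus d) : Measure (Torus d) :=
  (eulerK b γ x).withDensity (fun z => ENNReal.ofReal (1 - pkill lam γ z))
    + ((∫⁻ z, ENNReal.ofReal (pkill lam γ z) ∂(eulerK b γ x))
        * ∑' k : ℕ, (∫⁻ z, ENNReal.ofReal (pkill lam γ z) ∂(μ.bind (eulerK b γ))) ^ k)
      • ((μ.bind (eulerK b γ)).withDensity (fun z => ENNReal.ofReal (1 - pkill lam γ z)))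

/-- The nonlinear chain of laws `η_{n+1} = η_n Q_{η_n}`. -/
def etaChain {d : ℕ} (b : Torus d → Fin d → ℝ) (lam : Torus d → ℝ) (γ : ℝ)
    (η0 : Measure (Torus d)) : ℕ → Measure (Torus d)
  | 0 => η0
  | n + 1 => (etaChain b lam γ η0 n).bind (Qker b lam γ (etaChain b lam γ η0 n))

/-- The empirical measure `π(x) = N⁻¹ ∑ δ_{x_i}`. -/
def emp {d N : ℕ} (x : Fin N → Torus d) : Measure (Torus d) :=
  (N : ℝ≥0∞)⁻¹ • ∑ i, Measure.dirac (x i)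

/-- The mean-field particle kernel `R_{N,γ}(x,·) = ⊗_i Q_{π(x)}(x_i,·)`. -/
def Rker {d : ℕ} (b : Torus d → Fin d → ℝ) (lam : Torus d → ℝ) (γ : ℝ) {N : ℕ}
    (x : Fin N → Torus d) : Measure (Fin N → Torus d) :=
  Measure.pi fun i => Qker b lam γ (emp x) (x i)

/-- Iterated action of a kernel on a measure: `μ ↦ μ R^m`. -/
def iterK {E : Type*} [MeasurableSpace E] (R : E → Measure E) : ℕ → Measure E → Measure E
  | 0, μ => μ
  | m + 1, μ => (iterK R m μ).bind R

/-- The set of couplings of `μ` and `ν`. -/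
def Coupling {E : Type*} [MeasurableSpace E] (μ ν : Measure E) : Set (Measure (E × E)) :=
  {P | IsProbabilityMeasure P ∧ P.map Prod.fst = μ ∧ P.map Prod.snd = ν}

/-- The Wasserstein distance associated to a cost `ρ`:
`W_ρ(μ,ν) = inf { E[ρ(X,Y)] : X ~ μ, Y ~ ν }`. -/
def Wass {E : Type*} [MeasurableSpace E] (ρ : E → E → ℝ) (μ ν : Measure E) : ℝ :=
  sInf ((fun P : Measure (E × E) => ∫ z, ρ z.1 z.2 ∂P) '' Coupling μ ν)

/-- The distance `ρ(x,y) = (1 - e^{-a|x-y|})/a`. -/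
def rho {d : ℕ} (a : ℝ) (x y : Torus d) : ℝ := (1 - Real.exp (-a * tdist x y)) / a

/-- The distance `ρ_N(x,y) = ∑_i ρ(x_i,y_i)` on `(𝕋^d)^N`. -/
def rhoN {d : ℕ} (a : ℝ) {N : ℕ} (x y : Fin N → Torus d) : ℝ := ∑ i, rho a (x i) (y i)

/-- The rate `α(N)` of convergence of empirical measures. -/
def alphaRate (d N : ℕ) : ℝ :=
  if d = 1 then (N : ℝ) ^ (-(1/2 : ℝ))
  else if d = 2 then (N : ℝ) ^ (-(1/2 : ℝ)) * Real.log (1 + (N : ℝ))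
  else (N : ℝ) ^ (-(1 / (d : ℝ)))

/-- The contraction property of the Euler kernel in `W_ρ` (Majka's estimate). -/
def EulerContract {d : ℕ} (b : Torus d → Fin d → ℝ) (a c₁ γ₀ : ℝ) : Prop :=
  ∀ γ ∈ Set.Ioc (0 : ℝ) γ₀, ∀ μ ν : Measure (Torus d),
    IsProbabilityMeasure μ → IsProbabilityMeasure ν →
      Wass (rho a) (μ.bind (eulerK b γ)) (ν.bind (eulerK b γ)) ≤ (1 - c₁ * γ) * Wass (rho a) μ ν

/-- κ = c₁ - c₂ L_λ e^{γ ‖λ‖_∞}. -/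
def kap {d : ℕ} (lam : Torus d → ℝ) (c₁ c₂ L γ : ℝ) : ℝ :=
  c₁ - c₂ * L * Real.exp (γ * ⨆ z, lam z)

/-- The uniform contraction of the particle system `R_{N,γ}` in `W_{ρ_N}`. -/
def RContract {d : ℕ} (b : Torus d → Fin d → ℝ) (lam : Torus d → ℝ)
    (a c₁ c₂ L γ₀ : ℝ) : Prop :=
  ∀ γ ∈ Set.Ioc (0 : ℝ) γ₀, ∀ N : ℕ, ∀ μ ν : Measure (Fin N → Torus d),
    IsProbabilityMeasure μ → IsProbabilityMeasure ν →
      Wass (rhoN a) (μ.bind (Rker b lam γ)) (ν.bind (Rker b lam γ))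
        ≤ (1 - γ * kap lam c₁ c₂ L γ) * Wass (rhoN a) μ ν


/-! ### Auxiliary lemmas -/

section Aux

lemma tdist_nonneg' {d : ℕ} (x y : Torus d) : 0 ≤ tdist x y := Real.sqrt_nonneg _

lemma rho_nonneg' {d : ℕ} {a : ℝ} (ha : 0 < a) (x y : Torus d) : 0 ≤ rho a x y := by
  have h1 : Real.exp (-a * tdist x y) ≤ 1 :=
    Real.exp_le_one_iff.mpr (by nlinarith [tdist_nonneg' x y])
  exact div_nonneg (by linarith) ha.le

lemma rho_le_inv {d : ℕ} {a : ℝ} (ha : 0 < a) (x y : Torus d) : rho a x y ≤ 1 / a := by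
  have h1 : 0 < Real.exp (-a * tdist x y) := Real.exp_pos _
  unfold rho
  rw [div_le_div_iff₀ ha ha]
  nlinarith

lemma rhoN_nonneg' {d N : ℕ} {a : ℝ} (ha : 0 < a) (x y : Fin N → Torus d) : 0 ≤ rhoN a x y :=
  Finset.sum_nonneg fun i _ => rho_nonneg' ha _ _

lemma continuous_rho_comp {d : ℕ} {a : ℝ} {X : Type*} [TopologicalSpace X] {f g : X → Torus d}
    (hf : Continuous f) (hg : Continuous g) : Continuous fun w => rho a (f w) (g w) := by
  unfold rho tdist
  exact ((continuous_const.sub (Real.continuous_exp.comp (continuous_const.mul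
    ((continuous_finset_sum _ fun l _ =>
      (((continuous_apply l).comp hf).dist ((continuous_apply l).comp hg)).pow 2).sqrt)))).div_const a)

lemma continuous_rhoN_pair {d N : ℕ} {a : ℝ} :
    Continuous fun z : (Fin N → Torus d) × (Fin N → Torus d) => rhoN a z.1 z.2 := by
  unfold rhoN
  exact continuous_finset_sum _ fun i _ =>
    continuous_rho_comp ((continuous_apply i).comp continuous_fst)
      ((continuous_apply i).comp continuous_snd)

lemma wass_nonneg {E : Type*} [MeasurableSpace E] {ρ : E → E → ℝ}
    (hρ : ∀ x y, 0 ≤ ρ x y) (μ ν : Measure E) : 0 ≤ Wass ρ μ ν := by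
  unfold Wass
  refine Real.sInf_nonneg ?_
  rintro y ⟨P, -, rfl⟩
  exact integral_nonneg fun z => hρ _ _

lemma wass_le {E : Type*} [MeasurableSpace E] {ρ : E → E → ℝ}
    (hρ : ∀ x y, 0 ≤ ρ x y) {μ ν : Measure E} {Q : Measure (E × E)}
    (hQ : Q ∈ Coupling μ ν) : Wass ρ μ ν ≤ ∫ z, ρ z.1 z.2 ∂Q := by
  unfold Wass
  refine csInf_le ⟨0, ?_⟩ ⟨Q, hQ, rfl⟩
  rintro y ⟨P, -, rfl⟩
  exact integral_nonneg fun z => hρ _ _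

lemma alphaRate_pos {d N : ℕ} (hN : 1 ≤ N) : 0 < alphaRate d N := by
  have hN' : (0:ℝ) < N := by exact_mod_cast hN
  unfold alphaRate
  split_ifs
  · exact Real.rpow_pos_of_pos hN' _
  · exact mul_pos (Real.rpow_pos_of_pos hN' _)
      (Real.log_pos (by push_cast; linarith [(Nat.one_le_cast (α := ℝ)).mpr hN]))
  · exact Real.rpow_pos_of_pos hN' _

lemma alphaRate_nonneg {d N : ℕ} : 0 ≤ alphaRate d N := by
  unfold alphaRate
  split_ifs
  · exact Real.rpow_nonneg (Nat.cast_nonneg N) _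
  · exact mul_nonneg (Real.rpow_nonneg (Nat.cast_nonneg N) _)
      (Real.log_nonneg (by linarith [Nat.cast_nonneg (α := ℝ) N]))
  · exact Real.rpow_nonneg (Nat.cast_nonneg N) _

end Aux

section Aux2

instance stdGaussian_prob (d : ℕ) : IsProbabilityMeasure (stdGaussian d) := by
  unfold _root_.stdGaussian; infer_instance

lemma continuous_proj {d : ℕ} : Continuous (Torus.proj (d := d)) :=
  continuous_pi fun i => (AddCircle.continuous_mk' 1).comp (continuous_apply i)

lemma eulerK_prob {d : ℕ} (b : Torus d → Fin d → ℝ) (γ : ℝ) (x : Torus d) :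
    IsProbabilityMeasure (eulerK b γ x) := by
  have hm : Measurable fun g : Fin d → ℝ =>
      x + Torus.proj (fun i => γ * b x i + Real.sqrt γ * g i) :=
    (continuous_const.add (continuous_proj.comp (continuous_pi fun i =>
      continuous_const.add (continuous_const.mul (continuous_apply i))))).measurable
  unfold eulerK
  exact Measure.isProbabilityMeasure_map hm.aemeasurable

lemma pkill_nonneg {d : ℕ} {lam : Torus d → ℝ} {γ : ℝ} (hγ : 0 ≤ γ)
    (hlam0 : ∀ z, 0 ≤ lam z) (z : Torus d) : 0 ≤ pkill lam γ z := by
  have h1 : Real.exp (-(γ * lam z)) ≤ 1 :=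
    Real.exp_le_one_iff.mpr (by nlinarith [hlam0 z])
  unfold pkill; linarith

lemma bind_univ_le {α β : Type*} [MeasurableSpace α] [MeasurableSpace β]
    (μ : Measure α) (f : α → Measure β) (hμ : μ Set.univ ≤ 1)
    (hf : ∀ x, f x Set.univ ≤ 1) : μ.bind f Set.univ ≤ 1 := by
  rw [Measure.bind, Measure.join_apply MeasurableSet.univ]
  by_cases h : AEMeasurable f μ
  · rw [lintegral_map' ((Measure.measurable_coe MeasurableSet.univ).aemeasurable) h]
    calc ∫⁻ x, f x Set.univ ∂μ ≤ ∫⁻ _, 1 ∂μ := lintegral_mono hf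
      _ = μ Set.univ := lintegral_one
      _ ≤ 1 := hμ
  · rw [Measure.map_of_not_aemeasurable h]; simp

lemma emp_univ_le {d N : ℕ} (x : Fin N → Torus d) : emp x Set.univ ≤ 1 := by
  unfold emp
  rw [Measure.smul_apply, Measure.coe_finset_sum, Finset.sum_apply]
  simp only [Measure.dirac_apply' _ MeasurableSet.univ, Set.indicator_univ, Pi.one_apply,
    Finset.sum_const, Finset.card_univ, Fintype.card_fin, smul_eq_mul, nsmul_eq_mul, mul_one]
  rcases Nat.eq_zero_or_pos N with h | h
  · subst h; simp
  · rw [ENNReal.inv_mul_cancel (Nat.cast_ne_zero.mpr h.ne') (ENNReal.natCast_ne_top N)]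

lemma qker_finite {d : ℕ} (b : Torus d → Fin d → ℝ) {lam : Torus d → ℝ}
    (hlamc : Continuous lam) (hlam0 : ∀ z, 0 ≤ lam z) {γ : ℝ} (hγ : 0 < γ)
    (μ : Measure (Torus d)) (hμ : μ Set.univ ≤ 1) (x : Torus d) :
    IsFiniteMeasure (Qker b lam γ μ x) := by
  obtain ⟨z₀, -, hz₀⟩ := isCompact_univ.exists_isMaxOn Set.univ_nonempty hlamc.continuousOn
  set q : ℝ≥0∞ := ENNReal.ofReal (1 - Real.exp (-(γ * lam z₀))) with hqdef
  have hq1 : q < 1 := by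
    rw [hqdef, ← ENNReal.ofReal_one]
    refine ENNReal.ofReal_lt_ofReal_iff (by norm_num) |>.mpr ?_
    have := Real.exp_pos (-(γ * lam z₀)); linarith
  have hp_le : ∀ z, ENNReal.ofReal (pkill lam γ z) ≤ q := by
    intro z
    refine ENNReal.ofReal_le_ofReal ?_
    have hz : lam z ≤ lam z₀ := hz₀ (Set.mem_univ z)
    have h2 : Real.exp (-(γ * lam z₀)) ≤ Real.exp (-(γ * lam z)) :=
      Real.exp_le_exp.mpr (by nlinarith)
    unfold pkill; linarith
  have hp1 : ∀ z, ENNReal.ofReal (pkill lam γ z) ≤ 1 := fun z => (hp_le z).trans hq1.le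
  have hw : ∀ z, ENNReal.ofReal (1 - pkill lam γ z) ≤ 1 := fun z =>
    ENNReal.ofReal_le_one.mpr (by have := pkill_nonneg hγ.le hlam0 z; linarith)
  haveI := eulerK_prob b γ x
  have hM : (μ.bind (eulerK b γ)) Set.univ ≤ 1 :=
    bind_univ_le _ _ hμ fun z => by
      haveI := eulerK_prob b γ z; rw [measure_univ]
  have hwd : ∀ ν : Measure (Torus d),
      ν.withDensity (fun z => ENNReal.ofReal (1 - pkill lam γ z)) Set.univ ≤ ν Set.univ := by
    intro ν
    rw [withDensity_apply _ MeasurableSet.univ, Measure.restrict_univ]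
    calc ∫⁻ z, ENNReal.ofReal (1 - pkill lam γ z) ∂ν ≤ ∫⁻ _, 1 ∂ν := lintegral_mono hw
      _ = ν Set.univ := lintegral_one
  have hKp : ∫⁻ z, ENNReal.ofReal (pkill lam γ z) ∂(eulerK b γ x) ≤ 1 := by
    calc ∫⁻ z, ENNReal.ofReal (pkill lam γ z) ∂(eulerK b γ x) ≤ ∫⁻ _, 1 ∂(eulerK b γ x) :=
          lintegral_mono hp1
      _ = (eulerK b γ x) Set.univ := lintegral_one
      _ = 1 := measure_univ
  have hMp : ∫⁻ z, ENNReal.ofReal (pkill lam γ z) ∂(μ.bind (eulerK b γ)) ≤ q := by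
    calc ∫⁻ z, ENNReal.ofReal (pkill lam γ z) ∂(μ.bind (eulerK b γ))
        ≤ ∫⁻ _, q ∂(μ.bind (eulerK b γ)) := lintegral_mono hp_le
      _ = q * (μ.bind (eulerK b γ)) Set.univ := lintegral_const q
      _ ≤ q * 1 := by gcongr
      _ = q := mul_one q
  have htsum : ∑' k : ℕ, (∫⁻ z, ENNReal.ofReal (pkill lam γ z) ∂(μ.bind (eulerK b γ))) ^ k
      ≤ (1 - q)⁻¹ := by
    calc ∑' k : ℕ, (∫⁻ z, ENNReal.ofReal (pkill lam γ z) ∂(μ.bind (eulerK b γ))) ^ k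
        ≤ ∑' k : ℕ, q ^ k := ENNReal.tsum_le_tsum fun k => pow_le_pow_left' hMp k
      _ = (1 - q)⁻¹ := ENNReal.tsum_geometric q
  refine ⟨?_⟩
  unfold Qker
  rw [Measure.add_apply, Measure.smul_apply, smul_eq_mul]
  have hfin : (1 : ℝ≥0∞) + (1 * (1 - q)⁻¹) * 1 < ⊤ := by
    have h0 : (0:ℝ≥0∞) < 1 - q := tsub_pos_iff_lt.mpr hq1
    have : (1 - q)⁻¹ < ⊤ := ENNReal.inv_lt_top.mpr h0
    simp only [one_mul, mul_one]
    exact ENNReal.add_lt_top.mpr ⟨ENNReal.one_lt_top, this⟩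
  refine lt_of_le_of_lt (add_le_add ?_ ?_) hfin
  · exact (hwd _).trans_eq measure_univ
  · exact mul_le_mul' (mul_le_mul' hKp htsum) ((hwd _).trans hM)

end Aux2

section Aux4

lemma measurable_b {d : ℕ} (b : Torus d → Fin d → ℝ) (hb : IsC1Drift b) : Measurable b := by
  have hsec : Measurable fun (x : Torus d) (i : Fin d) => ((AddCircle.equivIoc (1:ℝ) 0) (x i) : ℝ) :=
    measurable_pi_lambda _ fun i =>
      (measurable_subtype_coe.comp (AddCircle.measurableEquivIoc (1:ℝ) 0).measurable).comp
        (measurable_pi_apply i)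
  have hlift : Continuous fun v : Fin d → ℝ => b (Torus.proj v) := (hb.continuous)
  have hrw : b = (fun v : Fin d → ℝ => b (Torus.proj v))
      ∘ (fun (x : Torus d) (i : Fin d) => ((AddCircle.equivIoc (1:ℝ) 0) (x i) : ℝ)) := by
    funext x
    have hx : Torus.proj (fun i => ((AddCircle.equivIoc (1:ℝ) 0) (x i) : ℝ)) = x :=
      funext fun i => (AddCircle.equivIoc (1:ℝ) 0).symm_apply_apply (x i)
    simp only [Function.comp]
    rw [hx]
  rw [hrw]
  exact hlift.measurable.comp hsec

lemma measurable_eulerK {d : ℕ} (b : Torus d → Fin d → ℝ) (hb : IsC1Drift b) (γ : ℝ) :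
    Measurable (eulerK b γ) := by
  refine Measure.measurable_of_measurable_coe _ fun s hs => ?_
  have hH : Measurable fun p : Torus d × (Fin d → ℝ) =>
      p.1 + Torus.proj (fun i => γ * b p.1 i + Real.sqrt γ * p.2 i) := by
    refine measurable_fst.add ?_
    refine continuous_proj.measurable.comp ?_
    refine measurable_pi_lambda _ fun i => ?_
    exact (measurable_const.mul
        ((measurable_pi_apply i).comp ((measurable_b b hb).comp measurable_fst))).add
      (measurable_const.mul ((measurable_pi_apply i).comp measurable_snd))
  have heq : ∀ x : Torus d, eulerK b γ x s
      = stdGaussian d (Prod.mk x ⁻¹' ((fun p : Torus d × (Fin d → ℝ) =>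
          p.1 + Torus.proj fun i => γ * b p.1 i + Real.sqrt γ * p.2 i) ⁻¹' s)) := by
    intro x
    have hFx : Measurable fun g : Fin d → ℝ =>
        x + Torus.proj fun i => γ * b x i + Real.sqrt γ * g i :=
      hH.comp measurable_prodMk_left
    unfold eulerK
    rw [Measure.map_apply hFx hs]
    rfl
  simp_rw [heq]
  exact measurable_measure_prodMk_left (hH hs)

lemma pkill_cont {d : ℕ} {lam : Torus d → ℝ} (hlamc : Continuous lam) (γ : ℝ) :
    Continuous (pkill lam γ) := by
  unfold pkill
  exact continuous_const.sub (Real.continuous_exp.comp ((continuous_const.mul hlamc).neg))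

lemma pkill_bound {d : ℕ} {lam : Torus d → ℝ} (hlamc : Continuous lam) {γ : ℝ} (hγ : 0 < γ) :
    ∃ q : ℝ≥0∞, q < 1 ∧ ∀ z : Torus d, ENNReal.ofReal (pkill lam γ z) ≤ q := by
  obtain ⟨z₀, -, hz₀⟩ := isCompact_univ.exists_isMaxOn Set.univ_nonempty hlamc.continuousOn
  refine ⟨ENNReal.ofReal (1 - Real.exp (-(γ * lam z₀))), ?_, ?_⟩
  · rw [← ENNReal.ofReal_one]
    refine (ENNReal.ofReal_lt_ofReal_iff (by norm_num)).mpr ?_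
    have := Real.exp_pos (-(γ * lam z₀)); linarith
  · intro z
    refine ENNReal.ofReal_le_ofReal ?_
    have hz : lam z ≤ lam z₀ := hz₀ (Set.mem_univ z)
    have h2 : Real.exp (-(γ * lam z₀)) ≤ Real.exp (-(γ * lam z)) :=
      Real.exp_le_exp.mpr (by nlinarith)
    unfold pkill; linarith

lemma qker_mass_one {d : ℕ} (b : Torus d → Fin d → ℝ) (hb : IsC1Drift b) {lam : Torus d → ℝ}
    (hlamc : Continuous lam) (hlam0 : ∀ z, 0 ≤ lam z) {γ : ℝ} (hγ : 0 < γ)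
    (μ : Measure (Torus d)) [IsProbabilityMeasure μ] (x : Torus d) :
    Qker b lam γ μ x Set.univ = 1 := by
  obtain ⟨q, hq1, hp_le⟩ := pkill_bound hlamc hγ
  have hpmeas : Measurable fun z : Torus d => ENNReal.ofReal (pkill lam γ z) :=
    ENNReal.measurable_ofReal.comp (pkill_cont hlamc γ).measurable
  have hp1 : ∀ z : Torus d, ENNReal.ofReal (pkill lam γ z) ≤ 1 :=
    fun z => (hp_le z).trans hq1.le
  haveI := eulerK_prob b γ x
  have hMuniv : (μ.bind (eulerK b γ)) Set.univ = 1 := by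
    rw [Measure.bind_apply MeasurableSet.univ (measurable_eulerK b hb γ).aemeasurable]
    have : ∀ z : Torus d, eulerK b γ z Set.univ = (1 : ℝ≥0∞) := fun z => by
      haveI := eulerK_prob b γ z; exact measure_univ
    simp_rw [this]
    rw [lintegral_one, measure_univ]
  haveI hMprob : IsProbabilityMeasure (μ.bind (eulerK b γ)) := ⟨hMuniv⟩
  have hsub : ∀ ρ : Measure (Torus d), IsProbabilityMeasure ρ →
      ρ.withDensity (fun z => ENNReal.ofReal (1 - pkill lam γ z)) Set.univ
        = 1 - ∫⁻ z, ENNReal.ofReal (pkill lam γ z) ∂ρ := by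
    intro ρ hρ
    rw [withDensity_apply _ MeasurableSet.univ, Measure.restrict_univ]
    have h1 : ∀ z : Torus d, ENNReal.ofReal (1 - pkill lam γ z)
        = 1 - ENNReal.ofReal (pkill lam γ z) := fun z => by
      rw [ENNReal.ofReal_sub _ (pkill_nonneg hγ.le hlam0 z), ENNReal.ofReal_one]
    simp_rw [h1]
    rw [lintegral_sub hpmeas ?hfin ?hle]
    · rw [lintegral_one, measure_univ]
    case hfin =>
      refine ne_top_of_le_ne_top ENNReal.one_ne_top ?_
      calc ∫⁻ z, ENNReal.ofReal (pkill lam γ z) ∂ρ ≤ ∫⁻ _, 1 ∂ρ := lintegral_mono hp1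
        _ = 1 := by rw [lintegral_one, measure_univ]
    case hle => exact Filter.Eventually.of_forall hp1
  have hKple : ∫⁻ z, ENNReal.ofReal (pkill lam γ z) ∂(eulerK b γ x) ≤ 1 := by
    calc ∫⁻ z, ENNReal.ofReal (pkill lam γ z) ∂(eulerK b γ x) ≤ ∫⁻ _, 1 ∂(eulerK b γ x) :=
        lintegral_mono hp1
      _ = 1 := by rw [lintegral_one, measure_univ]
  have hMple : ∫⁻ z, ENNReal.ofReal (pkill lam γ z) ∂(μ.bind (eulerK b γ)) ≤ q := by
    calc ∫⁻ z, ENNReal.ofReal (pkill lam γ z) ∂(μ.bind (eulerK b γ))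
        ≤ ∫⁻ _, q ∂(μ.bind (eulerK b γ)) := lintegral_mono hp_le
      _ = q := by rw [lintegral_const, measure_univ, mul_one]
  set r := ∫⁻ z, ENNReal.ofReal (pkill lam γ z) ∂(μ.bind (eulerK b γ)) with hrdef
  have hr1 : r < 1 := lt_of_le_of_lt hMple hq1
  have hrne : (1 : ℝ≥0∞) - r ≠ 0 := (tsub_pos_iff_lt.mpr hr1).ne'
  have hrnetop : (1 : ℝ≥0∞) - r ≠ ⊤ := ne_top_of_le_ne_top ENNReal.one_ne_top tsub_le_self
  unfold Qker
  rw [Measure.add_apply, Measure.smul_apply, smul_eq_mul]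
  rw [hsub _ (eulerK_prob b γ x), hsub _ hMprob, ← hrdef, ENNReal.tsum_geometric]
  have hcalc : (∫⁻ z, ENNReal.ofReal (pkill lam γ z) ∂(eulerK b γ x)) * (1 - r)⁻¹ * (1 - r)
      = ∫⁻ z, ENNReal.ofReal (pkill lam γ z) ∂(eulerK b γ x) := by
    rw [mul_assoc, ENNReal.inv_mul_cancel hrne hrnetop, mul_one]
  rw [hcalc]
  exact tsub_add_cancel_of_le hKple

lemma etaChain_prob_or_zero {d : ℕ} (b : Torus d → Fin d → ℝ) (hb : IsC1Drift b)
    {lam : Torus d → ℝ} (hlamc : Continuous lam) (hlam0 : ∀ z, 0 ≤ lam z) {γ : ℝ} (hγ : 0 < γ)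
    (η0 : Measure (Torus d)) [IsProbabilityMeasure η0] (m : ℕ) :
    IsProbabilityMeasure (etaChain b lam γ η0 m) ∨ etaChain b lam γ η0 m = 0 := by
  induction m with
  | zero => exact Or.inl ‹IsProbabilityMeasure η0›
  | succ m IH =>
    show IsProbabilityMeasure ((etaChain b lam γ η0 m).bind (Qker b lam γ (etaChain b lam γ η0 m)))
      ∨ (etaChain b lam γ η0 m).bind (Qker b lam γ (etaChain b lam γ η0 m)) = 0
    rcases IH with hprob | hzero
    · haveI := hprob
      by_cases h : AEMeasurable (Qker b lam γ (etaChain b lam γ η0 m)) (etaChain b lam γ η0 m)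
      · left
        obtain ⟨g, hg, hae⟩ := h
        have hbind : (etaChain b lam γ η0 m).bind (Qker b lam γ (etaChain b lam γ η0 m))
            = (etaChain b lam γ η0 m).bind g := by
          unfold Measure.bind
          rw [Measure.map_congr hae]
        refine ⟨?_⟩
        rw [hbind, Measure.bind_apply MeasurableSet.univ hg.aemeasurable]
        have h2 : ∫⁻ z, g z Set.univ ∂(etaChain b lam γ η0 m)
            = ∫⁻ z, Qker b lam γ (etaChain b lam γ η0 m) z Set.univ ∂(etaChain b lam γ η0 m) :=
          lintegral_congr_ae (by filter_upwards [hae] with z hz using by rw [hz])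
        rw [h2]
        have h3 : ∀ z : Torus d, Qker b lam γ (etaChain b lam γ η0 m) z Set.univ = 1 := fun z =>
          qker_mass_one b hb hlamc hlam0 hγ _ z
        simp_rw [h3]
        rw [lintegral_one, measure_univ]
      · right
        unfold Measure.bind
        rw [Measure.map_of_not_aemeasurable h, Measure.join_zero]
    · right
      rw [hzero]
      exact Measure.bind_zero_left _

end Aux4

section Aux3

open Set in
lemma map_pi_perm {X : Type*} [MeasurableSpace X] {N : ℕ} (κ : Fin N → Measure X)
    [∀ i, IsFiniteMeasure (κ i)] (e : Equiv.Perm (Fin N)) :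
    (Measure.pi κ).map (fun x i => x (e i)) = Measure.pi (fun i => κ (e i)) := by
  have hT : Measurable (fun (x : Fin N → X) i => x (e i)) :=
    measurable_pi_lambda _ fun i => measurable_pi_apply (e i)
  refine (Measure.pi_eq fun A hA => ?_).symm
  rw [Measure.map_apply hT (MeasurableSet.univ_pi hA)]
  have hpre : (fun (x : Fin N → X) i => x (e i)) ⁻¹' (univ.pi A)
      = univ.pi (fun j => A (e.symm j)) := by
    ext x
    simp only [Set.mem_preimage, Set.mem_pi, Set.mem_univ, true_implies]
    constructor
    · intro h j; have := h (e.symm j); simpa using this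
    · intro h i; have := h (e i); simpa using this
  rw [hpre, Measure.pi_pi]
  rw [← Equiv.prod_comp e (fun j => κ j (A (e.symm j)))]
  exact Finset.prod_congr rfl fun i _ => by simp

open Set in
lemma map_pi_castLE {X : Type*} [MeasurableSpace X] (η : Measure X) [IsProbabilityMeasure η]
    {k N : ℕ} (h : k ≤ N) :
    (Measure.pi fun _ : Fin N => η).map (fun x (i : Fin k) => x (Fin.castLE h i))
      = Measure.pi fun _ : Fin k => η := by
  have hT : Measurable fun (x : Fin N → X) (i : Fin k) => x (Fin.castLE h i) :=
    measurable_pi_lambda _ fun i => measurable_pi_apply _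
  refine (Measure.pi_eq fun A hA => ?_).symm
  rw [Measure.map_apply hT (MeasurableSet.univ_pi hA)]
  have hpre : (fun (x : Fin N → X) (i : Fin k) => x (Fin.castLE h i)) ⁻¹' (univ.pi A)
      = univ.pi (fun j : Fin N => if hj : (j : ℕ) < k then A ⟨j, hj⟩ else univ) := by
    ext x
    simp only [Set.mem_preimage, Set.mem_pi, Set.mem_univ, true_implies]
    constructor
    · intro hx j
      by_cases hj : (j : ℕ) < k
      · have := hx ⟨j, hj⟩
        simp only [hj, dif_pos]
        exact this
      · simp [hj]
    · intro hx i
      have := hx (Fin.castLE h i)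
      have hik : ((Fin.castLE h i : Fin N) : ℕ) < k := i.isLt
      simp only [hik, dif_pos] at this
      exact this
  rw [hpre, Measure.pi_pi]
  calc ∏ j : Fin N, η (if hj : (j : ℕ) < k then A ⟨j, hj⟩ else univ)
      = ∏ j : Fin N, (fun n : ℕ => if hj : n < k then η (A ⟨n, hj⟩) else 1) (j : ℕ) := by
        refine Finset.prod_congr rfl fun j _ => ?_
        by_cases hj : (j : ℕ) < k <;> simp [hj]
    _ = ∏ n ∈ Finset.range N, (fun n : ℕ => if hj : n < k then η (A ⟨n, hj⟩) else 1) n :=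
        Fin.prod_univ_eq_prod_range (fun n : ℕ => if hj : n < k then η (A ⟨n, hj⟩) else 1) N
    _ = ∏ n ∈ Finset.range k, (fun n : ℕ => if hj : n < k then η (A ⟨n, hj⟩) else 1) n := by
        refine (Finset.prod_subset (Finset.range_subset_range.mpr h) fun n _ hn => ?_).symm
        simp [Finset.mem_range.not.mp hn]
    _ = ∏ i : Fin k, (fun n : ℕ => if hj : n < k then η (A ⟨n, hj⟩) else 1) (i : ℕ) :=
        (Fin.prod_univ_eq_prod_range (fun n : ℕ => if hj : n < k then η (A ⟨n, hj⟩) else 1) k).symm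
    _ = ∏ i : Fin k, η (A i) := by
        refine Finset.prod_congr rfl fun i _ => ?_
        simp only [i.isLt, dif_pos]

lemma emp_perm {d N : ℕ} (x : Fin N → Torus d) (e : Equiv.Perm (Fin N)) :
    emp (fun i => x (e i)) = emp x := by
  unfold emp
  congr 1
  exact Equiv.sum_comp e fun i => Measure.dirac (x i)

lemma rker_perm {d : ℕ} (b : Torus d → Fin d → ℝ) {lam : Torus d → ℝ}
    (hlamc : Continuous lam) (hlam0 : ∀ z, 0 ≤ lam z) {γ : ℝ} (hγ : 0 < γ)
    {N : ℕ} (x : Fin N → Torus d) (e : Equiv.Perm (Fin N)) :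
    (Rker b lam γ x).map (fun y i => y (e i)) = Rker b lam γ (fun i => x (e i)) := by
  haveI : ∀ i, IsFiniteMeasure (Qker b lam γ (emp x) (x i)) := fun i =>
    qker_finite b hlamc hlam0 hγ _ (emp_univ_le x) _
  have h1 : Rker b lam γ (fun i => x (e i))
      = Measure.pi (fun i => Qker b lam γ (emp x) (x (e i))) := by
    unfold Rker
    rw [emp_perm]
  rw [h1]
  exact map_pi_perm (fun i => Qker b lam γ (emp x) (x i)) e

lemma iterK_perm {d : ℕ} (b : Torus d → Fin d → ℝ) {lam : Torus d → ℝ}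
    (hlamc : Continuous lam) (hlam0 : ∀ z, 0 ≤ lam z) {γ : ℝ} (hγ : 0 < γ)
    {N : ℕ} (η0 : Measure (Torus d)) [IsProbabilityMeasure η0] (e : Equiv.Perm (Fin N))
    (m : ℕ) :
    (iterK (Rker b lam γ) m (Measure.pi fun _ : Fin N => η0)).map (fun y i => y (e i))
      = iterK (Rker b lam γ) m (Measure.pi fun _ : Fin N => η0) := by
  have hT : Measurable fun (y : Fin N → Torus d) i => y (e i) :=
    measurable_pi_lambda _ fun i => measurable_pi_apply _
  induction m with
  | zero =>
    show (Measure.pi fun _ : Fin N => η0).map (fun y i => y (e i)) = _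
    exact map_pi_perm (fun _ : Fin N => η0) e
  | succ m IH =>
    set μ := iterK (Rker b lam γ) m (Measure.pi fun _ : Fin N => η0) with hμdef
    show (μ.bind (Rker b lam γ)).map (fun y i => y (e i)) = μ.bind (Rker b lam γ)
    by_cases h : AEMeasurable (Rker b lam γ (N := N)) μ
    · obtain ⟨g, hg, hRg⟩ := h
      have hbind : μ.bind (Rker b lam γ) = μ.bind g := by
        unfold Measure.bind
        rw [Measure.map_congr hRg]
      rw [hbind]
      ext s hs
      rw [Measure.map_apply hT hs, Measure.bind_apply (hT hs) hg.aemeasurable, Measure.bind_apply hs hg.aemeasurable]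
      have hcoe : AEMeasurable (fun y => Rker b lam γ y s) μ :=
        ⟨fun y => g y s, (Measure.measurable_coe hs).comp hg, by
          filter_upwards [hRg] with y hy using by rw [hy]⟩
      calc ∫⁻ y, g y ((fun y i => y (e i)) ⁻¹' s) ∂μ
          = ∫⁻ y, Rker b lam γ y ((fun y i => y (e i)) ⁻¹' s) ∂μ :=
            lintegral_congr_ae (by filter_upwards [hRg] with y hy using by rw [hy])
        _ = ∫⁻ y, Rker b lam γ (fun i => y (e i)) s ∂μ := by
            refine lintegral_congr fun y => ?_
            rw [← Measure.map_apply hT hs, rker_perm b hlamc hlam0 hγ y e]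
        _ = ∫⁻ y, Rker b lam γ y s ∂(μ.map (fun y i => y (e i))) :=
            (lintegral_map' (by rw [IH]; exact hcoe) hT.aemeasurable).symm
        _ = ∫⁻ y, Rker b lam γ y s ∂μ := by rw [IH]
        _ = ∫⁻ y, g y s ∂μ :=
            lintegral_congr_ae (by filter_upwards [hRg] with y hy using by rw [hy])
    · have hz : μ.bind (Rker b lam γ) = 0 := by
        unfold Measure.bind
        rw [Measure.map_of_not_aemeasurable h, Measure.join_zero]
      rw [hz]
      simp

end Aux3


set_option maxHeartbeats 1600000 in
/-- Marginal propagation of chaos: with the constant `C₂` of the propagation-of-chaos estimate,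
`W_{ρ_k}(Law(X_{1,m},…,X_{k,m}), η_m^{⊗k}) ≤ C₂ k α(N) γ ∑_{s=1}^m (1 − γκ)^{s−1}`. -/
theorem marginal_propagation_of_chaos
    {d : ℕ} (b : Torus d → Fin d → ℝ) (hb : IsC1Drift b)
    (a c₁ γ₀ : ℝ) (ha : 0 < a) (hc₁ : 0 < c₁) (hγ₀ : 0 < γ₀)
    (hK : EulerContract b a c₁ γ₀)
    (lam : Torus d → ℝ) (hlamc : Continuous lam) (hlam0 : ∀ z, 0 ≤ lam z)
    (L : ℝ) (hL : 0 ≤ L) (hLip : LipDrift L lam)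
    (c₂ : ℝ) (hc₂pos : 0 < c₂) (hc₂ : RContract b lam a c₁ c₂ L γ₀)
    (C₂ : ℝ) (hC₂pos : 0 < C₂)
    (hC₂ : ∀ N : ℕ, ∀ γ ∈ Set.Ioc (0 : ℝ) γ₀, ∀ m : ℕ,
      ∀ η0 : Measure (Torus d), IsProbabilityMeasure η0 →
        Wass (rhoN a) (iterK (Rker b lam γ) m (Measure.pi fun _ : Fin N => η0))
            (Measure.pi fun _ : Fin N => etaChain b lam γ η0 m)
          ≤ C₂ * N * alphaRate d N * γ
              * ∑ s ∈ Finset.range m, (1 - γ * kap lam c₁ c₂ L γ) ^ s) :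
    ∀ N : ℕ, ∀ γ ∈ Set.Ioc (0 : ℝ) γ₀, ∀ m : ℕ,
      ∀ η0 : Measure (Torus d), IsProbabilityMeasure η0 →
      ∀ k : ℕ, 1 ≤ k → ∀ hkN : k ≤ N,
        Wass (rhoN a)
            ((iterK (Rker b lam γ) m (Measure.pi fun _ : Fin N => η0)).map
              (fun x (i : Fin k) => x (Fin.castLE hkN i)))
            (Measure.pi fun _ : Fin k => etaChain b lam γ η0 m)
          ≤ C₂ * k * alphaRate d N * γ
              * ∑ s ∈ Finset.range m, (1 - γ * kap lam c₁ c₂ L γ) ^ s := by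
  intro N γ hγ m η0 hη0 k hk hkN
  haveI := hη0
  haveI : BorelSpace (Fin N → Torus d) := Pi.borelSpace
  haveI : BorelSpace (Fin k → Torus d) := Pi.borelSpace
  have hγpos : 0 < γ := hγ.1
  have hN1 : 1 ≤ N := hk.trans hkN
  have hNpos : (0 : ℝ) < N := by exact_mod_cast hN1
  have hkR : (0 : ℝ) < k := by exact_mod_cast hk
  have hα : 0 < alphaRate d N := alphaRate_pos hN1
  set S : ℝ := ∑ s ∈ Finset.range m, (1 - γ * kap lam c₁ c₂ L γ) ^ s with hSdef
  set μm := iterK (Rker b lam γ) m (Measure.pi fun _ : Fin N => η0) with hμmdef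
  set ηm := etaChain b lam γ η0 m with hηmdef
  set ν := Measure.pi fun _ : Fin N => ηm with hνdef
  set proj : (Fin N → Torus d) → (Fin k → Torus d) :=
    fun x (i : Fin k) => x (Fin.castLE hkN i) with hprojdef
  have hprojmeas : Measurable proj := measurable_pi_lambda _ fun i => measurable_pi_apply _
  have hfull : Wass (rhoN a) μm ν ≤ C₂ * N * alphaRate d N * γ * S := hC₂ N γ hγ m η0 hη0
  have hWfull0 : 0 ≤ Wass (rhoN a) μm ν := wass_nonneg (fun x y => rhoN_nonneg' ha x y) _ _
  have hS : 0 ≤ S := by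
    by_contra hScon
    push_neg at hScon
    have hneg : C₂ * N * alphaRate d N * γ * S < 0 :=
      mul_neg_of_pos_of_neg (by positivity) hScon
    linarith
  have hRHS0 : 0 ≤ C₂ * k * alphaRate d N * γ * S := by
    have h0 : 0 ≤ C₂ * k * alphaRate d N * γ := by positivity
    exact mul_nonneg h0 hS
  -- dispose of the degenerate case where the limit chain has died
  rcases etaChain_prob_or_zero b hb hlamc hlam0 hγpos η0 m with hηmprob | hηmzero
  swap
  · have hηmzero' : ηm = 0 := hηmzero
    have hpizero : (Measure.pi fun _ : Fin k => ηm) = 0 := by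
      rw [hηmzero']
      refine Measure.measure_univ_eq_zero.mp ?_
      rw [Measure.pi_univ]
      simp [zero_pow (by omega : k ≠ 0)]
    have hempty : Coupling (μm.map proj) (Measure.pi fun _ : Fin k => ηm) = ∅ := by
      refine Set.eq_empty_iff_forall_notMem.mpr fun P hP => ?_
      haveI := hP.1
      have h1 : (P.map Prod.snd) Set.univ = 1 := by
        rw [Measure.map_apply measurable_snd MeasurableSet.univ]
        simp [measure_univ]
      rw [hP.2.2, hpizero] at h1
      simp at h1
    unfold Wass
    rw [hempty, Set.image_empty, Real.sInf_empty]
    exact hRHS0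
  haveI : IsProbabilityMeasure ηm := hηmprob
  by_cases hne : (Coupling (μm.map proj) (Measure.pi fun _ : Fin k => ηm)).Nonempty
  swap
  · unfold Wass
    rw [Set.not_nonempty_iff_eq_empty.mp hne, Set.image_empty, Real.sInf_empty]
    exact hRHS0
  obtain ⟨P₀, hP₀⟩ := hne
  haveI hP₀prob : IsProbabilityMeasure P₀ := hP₀.1
  haveI hμmprob : IsProbabilityMeasure μm := by
    have h1 : (μm.map proj) Set.univ = 1 := by
      rw [← hP₀.2.1, Measure.map_apply measurable_fst MeasurableSet.univ]
      simp [measure_univ]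
    rw [Measure.map_apply hprojmeas MeasurableSet.univ, Set.preimage_univ] at h1
    exact ⟨h1⟩
  haveI : NeZero N := ⟨by omega⟩
  refine le_of_forall_pos_le_add fun ε hε => ?_
  have hbdd : BddBelow ((fun P : Measure ((Fin N → Torus d) × (Fin N → Torus d)) =>
      ∫ z, rhoN a z.1 z.2 ∂P) '' Coupling μm ν) := by
    refine ⟨0, ?_⟩
    rintro y ⟨P, -, rfl⟩
    exact integral_nonneg fun z => rhoN_nonneg' ha _ _
  have hcoup_full : μm.prod ν ∈ Coupling μm ν := by
    refine ⟨inferInstance, ?_, ?_⟩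
    · rw [Measure.map_fst_prod, measure_univ, one_smul]
    · rw [Measure.map_snd_prod, measure_univ, one_smul]
  have hlt : sInf ((fun P : Measure ((Fin N → Torus d) × (Fin N → Torus d)) =>
      ∫ z, rhoN a z.1 z.2 ∂P) '' Coupling μm ν) < Wass (rhoN a) μm ν + ε :=
    lt_add_of_pos_right _ hε
  obtain ⟨y, ⟨P, hP, rfl⟩, hy⟩ :=
    (csInf_lt_iff hbdd ⟨_, Set.mem_image_of_mem _ hcoup_full⟩).mp hlt
  haveI hPprob : IsProbabilityMeasure P := hP.1
  have hTmeas : ∀ j : Fin N, Measurable fun (y : Fin N → Torus d) i => y (Equiv.addLeft j i) :=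
    fun j => measurable_pi_lambda _ fun i => measurable_pi_apply _
  have exchμ : ∀ j : Fin N, μm.map (fun y i => y (Equiv.addLeft j i)) = μm := fun j =>
    iterK_perm b hlamc hlam0 hγpos η0 (Equiv.addLeft j) m
  have exchν : ∀ j : Fin N, ν.map (fun y i => y (Equiv.addLeft j i)) = ν := fun j =>
    map_pi_perm (fun _ : Fin N => ηm) (Equiv.addLeft j)
  set Φ : Fin N → ((Fin N → Torus d) × (Fin N → Torus d)) →
      ((Fin k → Torus d) × (Fin k → Torus d)) :=
    fun j z => (proj (fun i => z.1 (Equiv.addLeft j i)), proj (fun i => z.2 (Equiv.addLeft j i)))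
    with hΦdef
  have hΦmeas : ∀ j, Measurable (Φ j) := fun j =>
    ((hprojmeas.comp (hTmeas j)).comp measurable_fst).prodMk
      ((hprojmeas.comp (hTmeas j)).comp measurable_snd)
  have hQcoup : ∀ j, P.map (Φ j) ∈ Coupling (μm.map proj) (Measure.pi fun _ : Fin k => ηm) := by
    intro j
    refine ⟨Measure.isProbabilityMeasure_map (hΦmeas j).aemeasurable, ?_, ?_⟩
    · rw [Measure.map_map measurable_fst (hΦmeas j)]
      have hcomp : (Prod.fst ∘ Φ j)
          = (proj ∘ (fun y i => y (Equiv.addLeft j i))) ∘ Prod.fst := rfl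
      rw [hcomp, ← Measure.map_map (hprojmeas.comp (hTmeas j)) measurable_fst, hP.2.1,
        ← Measure.map_map hprojmeas (hTmeas j), exchμ j]
    · rw [Measure.map_map measurable_snd (hΦmeas j)]
      have hcomp : (Prod.snd ∘ Φ j)
          = (proj ∘ (fun y i => y (Equiv.addLeft j i))) ∘ Prod.snd := rfl
      rw [hcomp, ← Measure.map_map (hprojmeas.comp (hTmeas j)) measurable_snd, hP.2.2,
        ← Measure.map_map hprojmeas (hTmeas j), exchν j]
      exact map_pi_castLE ηm hkN
  have hval : ∀ j, Wass (rhoN a) (μm.map proj) (Measure.pi fun _ : Fin k => ηm)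
      ≤ ∫ z, rhoN a (Φ j z).1 (Φ j z).2 ∂P := by
    intro j
    have h1 := wass_le (fun x y => rhoN_nonneg' ha x y) (hQcoup j)
    rwa [integral_map (hΦmeas j).aemeasurable
      continuous_rhoN_pair.aestronglyMeasurable] at h1
  have hgmeas : ∀ j, AEStronglyMeasurable (fun z => rhoN a (Φ j z).1 (Φ j z).2) P := fun j =>
    (continuous_rhoN_pair.measurable.comp (hΦmeas j)).aestronglyMeasurable
  have hgint : ∀ j, Integrable (fun z => rhoN a (Φ j z).1 (Φ j z).2) P := by
    intro j
    refine (integrable_const ((k : ℝ) * (1 / a))).mono' (hgmeas j) ?_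
    refine Filter.Eventually.of_forall fun z => ?_
    rw [Real.norm_eq_abs, abs_of_nonneg (rhoN_nonneg' ha _ _)]
    calc rhoN a (Φ j z).1 (Φ j z).2 ≤ ∑ _i : Fin k, 1 / a :=
          Finset.sum_le_sum fun i _ => rho_le_inv ha _ _
      _ = (k : ℝ) * (1 / a) := by
          rw [Finset.sum_const, Finset.card_univ, Fintype.card_fin, nsmul_eq_mul]
  have hsum_pt : ∀ z : (Fin N → Torus d) × (Fin N → Torus d),
      ∑ j : Fin N, rhoN a (Φ j z).1 (Φ j z).2 = (k : ℝ) * rhoN a z.1 z.2 := by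
    intro z
    have h1 : ∀ j : Fin N, rhoN a (Φ j z).1 (Φ j z).2
        = ∑ i : Fin k, rho a (z.1 (Equiv.addLeft j (Fin.castLE hkN i)))
            (z.2 (Equiv.addLeft j (Fin.castLE hkN i))) := fun j => rfl
    simp only [h1]
    rw [Finset.sum_comm]
    have h2 : ∀ c : Fin N, (∑ j : Fin N, rho a (z.1 (Equiv.addLeft j c)) (z.2 (Equiv.addLeft j c)))
        = rhoN a z.1 z.2 :=
      fun c => Fintype.sum_equiv (Equiv.addRight c)
        (fun j => rho a (z.1 (Equiv.addLeft j c)) (z.2 (Equiv.addLeft j c)))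
        (fun l => rho a (z.1 l) (z.2 l)) (fun j => rfl)
    calc ∑ i : Fin k, ∑ j : Fin N, rho a (z.1 (Equiv.addLeft j (Fin.castLE hkN i)))
            (z.2 (Equiv.addLeft j (Fin.castLE hkN i)))
        = ∑ _i : Fin k, rhoN a z.1 z.2 := Finset.sum_congr rfl fun i _ => h2 _
      _ = (k : ℝ) * rhoN a z.1 z.2 := by
          rw [Finset.sum_const, Finset.card_univ, Fintype.card_fin, nsmul_eq_mul]
  have htotal : ∑ j : Fin N, ∫ z, rhoN a (Φ j z).1 (Φ j z).2 ∂P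
      = (k : ℝ) * ∫ z, rhoN a z.1 z.2 ∂P := by
    rw [← integral_finset_sum _ fun j _ => hgint j]
    rw [show (fun z => ∑ j : Fin N, rhoN a (Φ j z).1 (Φ j z).2)
        = fun z => (k : ℝ) * rhoN a z.1 z.2 from funext hsum_pt]
    exact integral_const_mul _ _
  have hexists : ∃ j : Fin N, ∫ z, rhoN a (Φ j z).1 (Φ j z).2 ∂P
      ≤ ((k : ℝ) * ∫ z, rhoN a z.1 z.2 ∂P) / N := by
    by_contra hcon
    push_neg at hcon
    have hlt2 := Finset.sum_lt_sum_of_nonempty (Finset.univ_nonempty (α := Fin N))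
      (fun j _ => hcon j)
    rw [htotal, Finset.sum_const, Finset.card_univ, Fintype.card_fin, nsmul_eq_mul] at hlt2
    have heq : (N : ℝ) * (((k : ℝ) * ∫ z, rhoN a z.1 z.2 ∂P) / N)
        = (k : ℝ) * ∫ z, rhoN a z.1 z.2 ∂P := by field_simp
    rw [heq] at hlt2
    exact lt_irrefl _ hlt2
  obtain ⟨j, hj⟩ := hexists
  have hI0 : 0 ≤ ∫ z, rhoN a z.1 z.2 ∂P := integral_nonneg fun z => rhoN_nonneg' ha _ _
  have hIB : ∫ z, rhoN a z.1 z.2 ∂P < C₂ * N * alphaRate d N * γ * S + ε :=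
    lt_of_lt_of_le hy (add_le_add_left hfull ε)
  have hkN' : (k : ℝ) ≤ N := by exact_mod_cast hkN
  calc Wass (rhoN a) (μm.map proj) (Measure.pi fun _ : Fin k => ηm)
      ≤ ∫ z, rhoN a (Φ j z).1 (Φ j z).2 ∂P := hval j
    _ ≤ ((k : ℝ) * ∫ z, rhoN a z.1 z.2 ∂P) / N := hj
    _ ≤ ((k : ℝ) * (C₂ * N * alphaRate d N * γ * S + ε)) / N := by gcongr
    _ ≤ C₂ * k * alphaRate d N * γ * S + ε := by
        have e1 : ((k : ℝ) * (C₂ * N * alphaRate d N * γ * S)) / N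
            = C₂ * k * alphaRate d N * γ * S := by
          rw [div_eq_iff hNpos.ne']; ring
        have e2 : ((k : ℝ) * ε) / N ≤ ε := by
          rw [div_le_iff₀ hNpos]
          nlinarith
        calc ((k : ℝ) * (C₂ * N * alphaRate d N * γ * S + ε)) / N
            = ((k : ℝ) * (C₂ * N * alphaRate d N * γ * S)) / N + ((k : ℝ) * ε) / N := by ring
          _ ≤ C₂ * k * alphaRate d N * γ * S + ε := by rw [e1]; linarith


end
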